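/- Let ψ_A, ψ_B ∈ ℂ² be unit vectors and let {α_{1,0}, α_{1,1}}, {α_{2,0}, α_{2,1}}, {β_{1,0}, β_{1,1}}, {β_{2,0}, β_{2,1}} be orthonormal bases of ℂ². Then the Born-rule empirical model of the product state ψ_A ⊗ ψ_B in the two-party Bell scenario, e_{{a_i, b_j}}(s,t) = |⟨α_{i,s} ⊗ β_{j,t}, ψ_A ⊗ ψ_B⟩|², is noncontextual: there exists a probability distribution d on functions g : {a₁,a₂,b₁,b₂} → {0,1} such that for every i, j ∈ {1,2} and every (s,t) ∈ {0,1}², Σ_{g : g(a_i) = s and g(b_j) = t} d(g) = e_{{a_i,b_j}}(s,t). -/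

import Mathlib

/-!
STATEMENT 2: In the two-party Bell scenario (measurements `a₁,a₂` for Alice and
`b₁,b₂` for Bob, encoded as `Fin 2 ⊕ Fin 2`, outcomes `{0,1}`), the Born-rule
empirical model of a product state `ψ_A ⊗ ψ_B` is noncontextual.
-/

open scoped ComplexConjugate
open Matrix

/-- Standard Hermitian inner product on `ℂ²` (conjugate-linear in the first slot). -/
noncomputable def ip2 (u v : Fin 2 → ℂ) : ℂ := ∑ i, conj (u i) * v i

/-- Tensor product `u ⊗ v ∈ ℂ² ⊗ ℂ²`, as a function on `Fin 2 × Fin 2`. -/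
noncomputable def tens (u v : Fin 2 → ℂ) : Fin 2 × Fin 2 → ℂ := fun p => u p.1 * v p.2

/-- Standard Hermitian inner product on `ℂ² ⊗ ℂ²` (conjugate-linear in the
first slot). -/
noncomputable def ip4 (u v : Fin 2 × Fin 2 → ℂ) : ℂ := ∑ p, conj (u p) * v p


lemma ip4_tens (a b c d : Fin 2 → ℂ) : ip4 (tens a b) (tens c d) = ip2 a c * ip2 b d := by
  simp only [ip4, ip2, tens, Fintype.sum_prod_type, Finset.sum_mul_sum, _root_.map_mul]
  refine Finset.sum_congr rfl fun i _ => Finset.sum_congr rfl fun j _ => by ring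

lemma col_orth (v : Fin 2 → Fin 2 → ℂ)
    (h : ∀ s t, ip2 (v s) (v t) = if s = t then 1 else 0) :
    ∀ i j, (∑ s, v s i * conj (v s j)) = if i = j then 1 else 0 := by
  let M : Matrix (Fin 2) (Fin 2) ℂ := Matrix.of v
  have h1 : M * Mᴴ = 1 := by
    ext s t
    have := congrArg conj (h s t)
    simp only [ip2, map_sum, _root_.map_mul, Complex.conj_conj] at this
    simp only [Matrix.mul_apply, Matrix.conjTranspose_apply, Matrix.one_apply, M, Matrix.of_apply,
      Complex.star_def]
    rw [this]
    split <;> simp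
  have h2 : Mᴴ * M = 1 := mul_eq_one_comm.mp h1
  intro i j
  have := congrFun (congrFun h2 j) i
  simp only [Matrix.mul_apply, Matrix.conjTranspose_apply, Matrix.one_apply, M,
    Matrix.of_apply, Complex.star_def] at this
  rw [show (∑ s, v s i * conj (v s j)) = ∑ s, conj (v s j) * v s i from
    Finset.sum_congr rfl fun s _ => mul_comm _ _, this]
  simp [eq_comm]

lemma parseval (v : Fin 2 → Fin 2 → ℂ)
    (h : ∀ s t, ip2 (v s) (v t) = if s = t then 1 else 0) (ψ : Fin 2 → ℂ) :
    ∑ s, ‖ip2 (v s) ψ‖ ^ 2 = ∑ i, ‖ψ i‖ ^ 2 := by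
  have key : ∑ s, ((‖ip2 (v s) ψ‖ : ℂ) ^ 2) = ∑ i, ((‖ψ i‖ : ℂ) ^ 2) := by
    have norm2 : ∀ z : ℂ, ((‖z‖ : ℂ)) ^ 2 = conj z * z := by
      intro z
      rw [← Complex.normSq_eq_conj_mul_self]
      norm_cast
      simp [Complex.normSq_eq_norm_sq]
    simp only [norm2]
    have c := col_orth v h
    have c00 := c 0 0; have c01 := c 0 1; have c10 := c 1 0; have c11 := c 1 1
    simp only [Fin.sum_univ_two, eq_self_iff_true, if_true] at c00 c01 c10 c11 ⊢
    rw [if_neg (by decide : ¬(0:Fin 2)=1)] at c01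
    rw [if_neg (by decide : ¬(1:Fin 2)=0)] at c10
    simp only [ip2, Fin.sum_univ_two, map_add, _root_.map_mul, Complex.conj_conj]
    linear_combination (conj (ψ 0) * ψ 0) * c00 + (conj (ψ 0) * ψ 1) * c01 +
      (conj (ψ 1) * ψ 0) * c10 + (conj (ψ 1) * ψ 1) * c11
  exact_mod_cast key

lemma sum4 (f g h k : Fin 2 → ℝ) :
    ∑ q : Fin 2 × Fin 2 × Fin 2 × Fin 2, f q.1 * g q.2.1 * h q.2.2.1 * k q.2.2.2
      = (∑ a, f a) * (∑ b, g b) * (∑ c, h c) * (∑ e, k e) := by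
  simp [Fintype.sum_prod_type, Fin.sum_univ_two]; ring

theorem product_state_bell_model_noncontextual
    (ψA ψB : Fin 2 → ℂ)
    (hψA : ∑ i, ‖ψA i‖ ^ 2 = 1) (hψB : ∑ i, ‖ψB i‖ ^ 2 = 1)
    (α β : Fin 2 → Fin 2 → Fin 2 → ℂ)
    (hα : ∀ i s t, ip2 (α i s) (α i t) = if s = t then 1 else 0)
    (hβ : ∀ j s t, ip2 (β j s) (β j t) = if s = t then 1 else 0) :
    ∃ d : (Fin 2 ⊕ Fin 2 → Fin 2) → ℝ,
      (∀ g, 0 ≤ d g) ∧ (∑ g, d g) = 1 ∧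
      ∀ i j s t : Fin 2,
        (∑ g ∈ Finset.univ.filter
            (fun g : Fin 2 ⊕ Fin 2 → Fin 2 => g (.inl i) = s ∧ g (.inr j) = t), d g)
          = ‖ip4 (tens (α i s) (β j t)) (tens ψA ψB)‖ ^ 2 := by
  set pA : Fin 2 → Fin 2 → ℝ := fun i s => ‖ip2 (α i s) ψA‖ ^ 2 with hpA
  set pB : Fin 2 → Fin 2 → ℝ := fun j t => ‖ip2 (β j t) ψB‖ ^ 2 with hpB
  have hA : ∀ i, (∑ s, pA i s) = 1 := fun i => by
    rw [hpA]; exact (parseval (α i) (hα i) ψA).trans hψA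
  have hB : ∀ j, (∑ t, pB j t) = 1 := fun j => by
    rw [hpB]; exact (parseval (β j) (hβ j) ψB).trans hψB
  set E : (Fin 2 ⊕ Fin 2 → Fin 2) ≃ Fin 2 × Fin 2 × Fin 2 × Fin 2 :=
    { toFun := fun g => (g (.inl 0), g (.inl 1), g (.inr 0), g (.inr 1))
      invFun := fun q => Sum.elim ![q.1, q.2.1] ![q.2.2.1, q.2.2.2]
      left_inv := by decide
      right_inv := by decide } with hE
  refine ⟨fun g => pA 0 (g (.inl 0)) * pA 1 (g (.inl 1)) * pB 0 (g (.inr 0)) * pB 1 (g (.inr 1)),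
    fun g => by positivity, ?_, ?_⟩
  · rw [← Equiv.sum_comp E.symm]
    have : ∀ q : Fin 2 × Fin 2 × Fin 2 × Fin 2,
        (fun g => pA 0 (g (.inl 0)) * pA 1 (g (.inl 1)) * pB 0 (g (.inr 0)) * pB 1 (g (.inr 1)))
          (E.symm q) = pA 0 q.1 * pA 1 q.2.1 * pB 0 q.2.2.1 * pB 1 q.2.2.2 := by
      intro q; simp [hE]
    rw [Finset.sum_congr rfl fun q _ => this q, sum4, hA, hA, hB, hB]; ring
  · intro i j s t
    rw [ip4_tens, norm_mul, mul_pow, Finset.sum_filter, ← Equiv.sum_comp E.symm]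
    fin_cases i <;> fin_cases j
    · have point : ∀ q : Fin 2 × Fin 2 × Fin 2 × Fin 2,
          (if E.symm q (.inl 0) = s ∧ E.symm q (.inr 0) = t then
            pA 0 (E.symm q (.inl 0)) * pA 1 (E.symm q (.inl 1)) * pB 0 (E.symm q (.inr 0))
              * pB 1 (E.symm q (.inr 1)) else 0)
          = (if q.1 = s then pA 0 q.1 else 0) * pA 1 q.2.1 * (if q.2.2.1 = t then pB 0 q.2.2.1 else 0) * pB 1 q.2.2.2 := by
        intro q
        simp only [hE, Equiv.coe_fn_symm_mk, Sum.elim_inl, Sum.elim_inr,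
          Matrix.cons_val_zero, Matrix.cons_val_one, Matrix.head_cons]
        split_ifs <;> first | ring1 | tauto
      simp only [Fin.zero_eta, Fin.mk_one]
      rw [Finset.sum_congr rfl fun q _ => point q]
      refine Eq.trans (sum4 (fun a => if a = s then pA 0 a else 0) (pA 1) (fun c => if c = t then pB 0 c else 0) (pB 1)) ?_
      rw [hA 1, hB 1]
      simp [hpA, hpB, Finset.sum_ite_eq]
    · have point : ∀ q : Fin 2 × Fin 2 × Fin 2 × Fin 2,
          (if E.symm q (.inl 0) = s ∧ E.symm q (.inr 1) = t then
            pA 0 (E.symm q (.inl 0)) * pA 1 (E.symm q (.inl 1)) * pB 0 (E.symm q (.inr 0))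
              * pB 1 (E.symm q (.inr 1)) else 0)
          = (if q.1 = s then pA 0 q.1 else 0) * pA 1 q.2.1 * pB 0 q.2.2.1 * (if q.2.2.2 = t then pB 1 q.2.2.2 else 0) := by
        intro q
        simp only [hE, Equiv.coe_fn_symm_mk, Sum.elim_inl, Sum.elim_inr,
          Matrix.cons_val_zero, Matrix.cons_val_one, Matrix.head_cons]
        split_ifs <;> first | ring1 | tauto
      simp only [Fin.zero_eta, Fin.mk_one]
      rw [Finset.sum_congr rfl fun q _ => point q]
      refine Eq.trans (sum4 (fun a => if a = s then pA 0 a else 0) (pA 1) (pB 0) (fun e => if e = t then pB 1 e else 0)) ?_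
      rw [hA 1, hB 0]
      simp [hpA, hpB, Finset.sum_ite_eq]
    · have point : ∀ q : Fin 2 × Fin 2 × Fin 2 × Fin 2,
          (if E.symm q (.inl 1) = s ∧ E.symm q (.inr 0) = t then
            pA 0 (E.symm q (.inl 0)) * pA 1 (E.symm q (.inl 1)) * pB 0 (E.symm q (.inr 0))
              * pB 1 (E.symm q (.inr 1)) else 0)
          = pA 0 q.1 * (if q.2.1 = s then pA 1 q.2.1 else 0) * (if q.2.2.1 = t then pB 0 q.2.2.1 else 0) * pB 1 q.2.2.2 := by
        intro q
        simp only [hE, Equiv.coe_fn_symm_mk, Sum.elim_inl, Sum.elim_inr,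
          Matrix.cons_val_zero, Matrix.cons_val_one, Matrix.head_cons]
        split_ifs <;> first | ring1 | tauto
      simp only [Fin.zero_eta, Fin.mk_one]
      rw [Finset.sum_congr rfl fun q _ => point q]
      refine Eq.trans (sum4 (pA 0) (fun b => if b = s then pA 1 b else 0) (fun c => if c = t then pB 0 c else 0) (pB 1)) ?_
      rw [hA 0, hB 1]
      simp [hpA, hpB, Finset.sum_ite_eq]
    · have point : ∀ q : Fin 2 × Fin 2 × Fin 2 × Fin 2,
          (if E.symm q (.inl 1) = s ∧ E.symm q (.inr 1) = t then
            pA 0 (E.symm q (.inl 0)) * pA 1 (E.symm q (.inl 1)) * pB 0 (E.symm q (.inr 0))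
              * pB 1 (E.symm q (.inr 1)) else 0)
          = pA 0 q.1 * (if q.2.1 = s then pA 1 q.2.1 else 0) * pB 0 q.2.2.1 * (if q.2.2.2 = t then pB 1 q.2.2.2 else 0) := by
        intro q
        simp only [hE, Equiv.coe_fn_symm_mk, Sum.elim_inl, Sum.elim_inr,
          Matrix.cons_val_zero, Matrix.cons_val_one, Matrix.head_cons]
        split_ifs <;> first | ring1 | tauto
      simp only [Fin.zero_eta, Fin.mk_one]
      rw [Finset.sum_congr rfl fun q _ => point q]
      refine Eq.trans (sum4 (pA 0) (fun b => if b = s then pA 1 b else 0) (pB 0) (fun e => if e = t then pB 1 e else 0)) ?_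
      rw [hA 0, hB 0]
      simp [hpA, hpB, Finset.sum_ite_eq]
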